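/- Let X be a type, x̊ ∈ X, and g, f : X → ℝ. Write X^{g↓} = {x ∈ X : g(x) < g(x̊)}. If the necessary condition is violated, i.e., there exists x ∈ X^{g↓} with f(x̊) - f(x) > g(x̊) - g(x), then there exist a point x_• ∈ X^{g↓} and a cost function c for base point x̊ satisfying the following three conditions: (i) 0 < g(x̊) - g(x_•) < c(x_•); (ii) c(x_•) < f(x̊) - f(x_•); and (iii) for every x ∈ X^{g↓} with x ≠ x_•, c(x_•) + (f(x_•) - f(x)) < c(x). -/

import Mathlib

/-- A cost function for base point `x0`: nonnegative, zero at `x0`, positive elsewhere. -/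
def IsCostFn {X : Type*} (x0 : X) (c : X → ℝ) : Prop :=
  (∀ x, 0 ≤ c x) ∧ c x0 = 0 ∧ ∀ x, x ≠ x0 → 0 < c x

/-- If the necessary condition is violated on the lower-score set `X^{g↓}`, there exist a
point `xb ∈ X^{g↓}` and a cost function satisfying the three conditions of the lemma. -/
theorem violation_lemma {X : Type*} (x0 : X) (g f : X → ℝ)
    (hviol : ∃ x : X, g x < g x0 ∧ f x0 - f x > g x0 - g x) :
    ∃ (xb : X) (c : X → ℝ), g xb < g x0 ∧ IsCostFn x0 c ∧
      (0 < g x0 - g xb ∧ g x0 - g xb < c xb) ∧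
      (c xb < f x0 - f xb) ∧
      (∀ x : X, g x < g x0 → x ≠ xb → c xb + (f xb - f x) < c x) := by
  classical
  obtain ⟨xb, hg, hf⟩ := hviol
  set a := g x0 - g xb with ha
  set b := f x0 - f xb with hb
  have ha0 : 0 < a := by simp [ha]; linarith
  have hab : a < b := hf
  set m := (a + b) / 2 with hm
  have hm1 : a < m := by simp [hm]; linarith
  have hm2 : m < b := by simp [hm]; linarith
  have hm0 : 0 < m := lt_trans ha0 hm1
  have hxb0 : xb ≠ x0 := by intro h; rw [h] at hg; exact lt_irrefl _ hg
  refine ⟨xb, fun x => if x = x0 then 0 else if x = xb then m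
    else max 1 (m + (f xb - f x) + 1), hg, ⟨?_, ?_, ?_⟩, ⟨ha0, ?_⟩, ?_, ?_⟩
  · intro x
    dsimp only
    split_ifs with h1 h2
    · exact le_refl 0
    · exact hm0.le
    · exact le_trans zero_le_one (le_max_left _ _)
  · simp
  · intro x hx
    dsimp only
    split_ifs with h1 h2
    · exact absurd h1 hx
    · exact hm0
    · exact lt_of_lt_of_le zero_lt_one (le_max_left _ _)
  · simp [hxb0, hm1]; exact hm1
  · simp [hxb0, hm2]; exact hm2
  · intro x hgx hne
    have hx0 : x ≠ x0 := by intro h; rw [h] at hgx; exact lt_irrefl _ hgx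
    simp only [if_neg hx0, if_neg hxb0, if_neg hne]
    have : m + (f xb - f x) < m + (f xb - f x) + 1 := by linarith
    exact lt_of_lt_of_le this (le_max_right _ _)
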